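/- Let X and Y be Banach spaces and T : X → Y a bounded linear operator. Then T is compact if and only if there exists a sequence (u_n) of continuous linear functionals in X* with ‖u_n‖ → 0 such that ‖Tx‖ ≤ sup_n |u_n(x)| for every x ∈ X. -/

import Mathlib

set_option maxHeartbeats 1000000


open Filter

namespace TerzAux
set_option linter.unusedSectionVars false
set_option maxHeartbeats 1000000
section Concat

variable {E : Type*} [NormedAddCommGroup E]

/-- prefix sums of lengths -/
def ps (L : ℕ → List E) : ℕ → ℕ
  | 0 => 0
  | k + 1 => ps L k + (L k).length

variable {L : ℕ → List E} (hL : ∀ k, L k ≠ [])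
include hL

theorem ps_strictMono : StrictMono (ps L) := by
  apply strictMono_nat_of_lt_succ
  intro k
  have : (L k).length ≠ 0 := fun h => hL k (List.length_eq_zero_iff.mp h)
  simp [ps]
  omega

theorem self_le_ps : ∀ k, k ≤ ps L k := by
  intro k
  induction k with
  | zero => simp [ps]
  | succ k ih =>
    have : (L k).length ≠ 0 := fun h => hL k (List.length_eq_zero_iff.mp h)
    simp only [ps]; omega

/-- index of the block containing position n -/
def blk (L : ℕ → List E) (n : ℕ) : ℕ := Nat.findGreatest (fun k => ps L k ≤ n) n

theorem ps_blk_le (n : ℕ) : ps L (blk L n) ≤ n :=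
  Nat.findGreatest_spec (P := fun k => ps L k ≤ n) (Nat.zero_le n) (by simp [ps])

theorem lt_ps_blk_succ (n : ℕ) : n < ps L (blk L n + 1) := by
  by_contra h
  push_neg at h
  rcases lt_or_eq_of_le (Nat.findGreatest_le (P := fun k => ps L k ≤ n) n) with hlt | heq
  · exact Nat.findGreatest_is_greatest (Nat.lt_succ_self _) hlt h
  · have h1 : n ≤ ps L n := self_le_ps hL n
    have h2 : ps L n < ps L (n + 1) := ps_strictMono hL (Nat.lt_succ_self n)
    have heq' : blk L n = n := heq
    rw [heq'] at h
    omega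

theorem blk_eq (k i : ℕ) (hi : i < (L k).length) : blk L (ps L k + i) = k := by
  set n := ps L k + i with hn
  have h1 : k ≤ blk L n := by
    apply Nat.le_findGreatest
    · exact le_trans (self_le_ps hL k) (Nat.le_add_right _ _)
    · omega
  have h2 : blk L n ≤ k := by
    by_contra h
    push_neg at h
    have := ps_blk_le (L := L) hL n
    have h3 : ps L (k + 1) ≤ ps L (blk L n) := (ps_strictMono hL).monotone h
    simp only [ps] at h3
    omega
  omega

/-- the concatenated sequence -/
noncomputable def useq (L : ℕ → List E) (n : ℕ) : E :=
  (L (blk L n)).getD (n - ps L (blk L n)) 0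

theorem useq_mem (n : ℕ) : useq L n ∈ L (blk L n) := by
  have h1 := ps_blk_le (L := L) hL n
  have h2 := lt_ps_blk_succ (L := L) hL n
  simp only [ps] at h2
  have hlt : n - ps L (blk L n) < (L (blk L n)).length := by omega
  rw [useq, List.getD_eq_getElem _ _ hlt]
  exact List.getElem_mem _

theorem useq_surj (k : ℕ) (h : E) (hh : h ∈ L k) : ∃ n, blk L n = k ∧ useq L n = h := by
  obtain ⟨i, hi, hgi⟩ := List.getElem_of_mem hh
  refine ⟨ps L k + i, blk_eq hL k i hi, ?_⟩
  rw [useq, blk_eq hL k i hi]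
  simp only [Nat.add_sub_cancel_left]
  rw [List.getD_eq_getElem _ _ hi]
  exact hgi

theorem blk_large {K n : ℕ} (h : ps L K ≤ n) : K ≤ blk L n := by
  have h2 := lt_ps_blk_succ (L := L) hL n
  by_contra hc
  push_neg at hc
  have : ps L (K) ≥ ps L (blk L n + 1) := (ps_strictMono hL).monotone hc
  omega


end Concat

section Null

variable {𝕜 X : Type*} [RCLike 𝕜] [NormedAddCommGroup X] [NormedSpace 𝕜 X]

theorem bddAbove_eval (u : ℕ → X →L[𝕜] 𝕜) (hu : Tendsto (fun n => ‖u n‖) atTop (nhds 0))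
    (x : X) : BddAbove (Set.range fun n => ‖u n x‖) := by
  obtain ⟨C, hC⟩ := hu.bddAbove_range
  refine ⟨C * ‖x‖, ?_⟩
  rintro - ⟨n, rfl⟩
  calc ‖u n x‖ ≤ ‖u n‖ * ‖x‖ := (u n).le_opNorm x
    _ ≤ C * ‖x‖ := by
        have : ‖u n‖ ≤ C := hC ⟨n, rfl⟩
        nlinarith [norm_nonneg x]

theorem exists_null_seq (S : Set (X →L[𝕜] 𝕜)) (hS : TotallyBounded S) :
    ∃ u : ℕ → X →L[𝕜] 𝕜, Tendsto (fun n => ‖u n‖) atTop (nhds 0) ∧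
      ∀ f ∈ S, ∀ x : X, ‖f x‖ ≤ ⨆ n, ‖u n x‖ := by
  classical
  -- nets
  have hnet : ∀ k : ℕ, ∃ t : Set (X →L[𝕜] 𝕜), t.Finite ∧ S ⊆ ⋃ g ∈ t, Metric.ball g ((4:ℝ)⁻¹ ^ k) :=
    fun k => Metric.totallyBounded_iff.mp hS ((4:ℝ)⁻¹ ^ k) (by positivity)
  choose F hFfin hFsub using hnet
  -- the candidate blocks
  set G : ℕ → Set (X →L[𝕜] 𝕜) := fun k =>
    Nat.casesOn k ((fun g => (2:𝕜) • g) '' F 0)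
      (fun j => (fun p : (X →L[𝕜] 𝕜) × (X →L[𝕜] 𝕜) => ((2:𝕜)^(j+2)) • (p.1 - p.2)) ''
        {p : (X →L[𝕜] 𝕜) × (X →L[𝕜] 𝕜) |
          p.1 ∈ F (j+1) ∧ p.2 ∈ F j ∧ ‖p.1 - p.2‖ ≤ 2 * (4:ℝ)⁻¹ ^ j}) with hG
  have hGfin : ∀ k, (G k).Finite := by
    intro k
    cases k with
    | zero => exact (hFfin 0).image _
    | succ j =>
      refine Set.Finite.image _ (Set.Finite.subset ((hFfin (j+1)).prod (hFfin j)) ?_)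
      rintro ⟨a, b⟩ ⟨ha, hb, -⟩
      exact ⟨ha, hb⟩
  set L : ℕ → List (X →L[𝕜] 𝕜) := fun k => 0 :: (hGfin k).toFinset.toList with hLdef
  have hL : ∀ k, L k ≠ [] := fun k => List.cons_ne_nil _ _
  have hmemL : ∀ k, ∀ h ∈ G k, h ∈ L k := by
    intro k h hh
    exact List.mem_cons_of_mem _ (Finset.mem_toList.mpr ((hGfin k).mem_toFinset.mpr hh))
  set u : ℕ → (X →L[𝕜] 𝕜) := useq L with hu
  -- norms in later blocks are small
  have hsmall : ∀ j : ℕ, ∀ h ∈ L (j+1), ‖h‖ ≤ 16 * (2:ℝ)⁻¹ ^ (j+1) := by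
    intro j h hh
    rcases List.mem_cons.mp hh with rfl | hh
    · simp only [norm_zero]; positivity
    · obtain ⟨p, ⟨-, -, hp⟩, rfl⟩ := (hGfin (j+1)).mem_toFinset.mp (Finset.mem_toList.mp hh)
      have hnorm : ‖((2:𝕜)^(j+2)) • (p.1 - p.2)‖ = (2:ℝ)^(j+2) * ‖p.1 - p.2‖ := by
        have := norm_smul ((2:𝕜)^(j+2)) (p.1 - p.2)
        rw [this, norm_pow, RCLike.norm_ofNat]
      rw [hnorm]
      have key : (2:ℝ)^(j+2) * (2 * (4:ℝ)⁻¹ ^ j) = 16 * (2:ℝ)⁻¹ ^ (j+1) := by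
        have h2 : (2:ℝ)^j * (2:ℝ)⁻¹^j = 1 := by
          rw [← mul_pow]; norm_num
        rw [show ((4:ℝ)⁻¹)^j = 2⁻¹^j * 2⁻¹^j from by rw [← mul_pow]; norm_num]
        rw [pow_succ, pow_succ, pow_succ]
        linear_combination (8 * (2:ℝ)⁻¹ ^ j) * h2
      calc (2:ℝ)^(j+2) * ‖p.1 - p.2‖ ≤ (2:ℝ)^(j+2) * (2 * (4:ℝ)⁻¹ ^ j) := by
            nlinarith [pow_pos (show (0:ℝ) < 2 by norm_num) (j+2)]
        _ = 16 * (2:ℝ)⁻¹ ^ (j+1) := key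
  -- global bound
  set M₀ : ℝ := (((hGfin 0).toFinset.sup fun h => ‖h‖₊ : NNReal) : ℝ) with hM₀
  have hL0 : ∀ h ∈ L 0, ‖h‖ ≤ M₀ := by
    intro h hh
    rcases List.mem_cons.mp hh with rfl | hh
    · simp only [norm_zero]; exact NNReal.coe_nonneg _
    · have := Finset.le_sup (f := fun h : X →L[𝕜] 𝕜 => ‖h‖₊) (Finset.mem_toList.mp hh)
      exact_mod_cast this
  have hglobal : ∀ n, ‖u n‖ ≤ max M₀ 16 := by
    intro n
    have hmem := useq_mem hL n
    cases hB : blk L n with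
    | zero => rw [hB] at hmem; exact le_trans (hL0 _ hmem) (le_max_left _ _)
    | succ j =>
      rw [hB] at hmem
      refine le_trans (hsmall j _ hmem) (le_trans ?_ (le_max_right _ _))
      have : (2:ℝ)⁻¹ ^ (j+1) ≤ 1 := by
        apply pow_le_one₀ <;> norm_num
      nlinarith
  -- tendsto
  have htend : Tendsto (fun n => ‖u n‖) atTop (nhds 0) := by
    rw [Metric.tendsto_atTop]
    intro ε hε
    obtain ⟨K, hK⟩ := exists_pow_lt_of_lt_one (show (0:ℝ) < ε / 16 by positivity)
      (show (2:ℝ)⁻¹ < 1 by norm_num)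
    refine ⟨ps L (K + 1), fun n hn => ?_⟩
    have hblk : K + 1 ≤ blk L n := blk_large hL hn
    obtain ⟨j, hj⟩ : ∃ j, blk L n = j + 1 := ⟨blk L n - 1, by omega⟩
    have hmem := useq_mem hL n
    rw [hj] at hmem
    have h1 : ‖u n‖ ≤ 16 * (2:ℝ)⁻¹ ^ (j+1) := hsmall j _ hmem
    have h2 : (2:ℝ)⁻¹ ^ (j+1) ≤ (2:ℝ)⁻¹ ^ K := by
      apply pow_le_pow_of_le_one (by norm_num) (by norm_num)
      omega
    rw [Real.dist_0_eq_abs, abs_of_nonneg (norm_nonneg _)]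
    nlinarith
  refine ⟨u, htend, ?_⟩
  -- the main bound
  intro f hf x
  have hbdd : BddAbove (Set.range fun n => ‖u n x‖) := bddAbove_eval u htend x
  set V : ℝ := ⨆ n, ‖u n x‖ with hV
  have hV0 : 0 ≤ V := le_trans (norm_nonneg _) (le_ciSup hbdd 0)
  have hevalle : ∀ k : ℕ, ∀ h ∈ L k, ‖h x‖ ≤ V := by
    intro k h hh
    obtain ⟨n, -, rfl⟩ := useq_surj hL k h hh
    exact le_ciSup hbdd n
  -- choose approximants
  have happrox : ∀ k : ℕ, ∃ g ∈ F k, f ∈ Metric.ball g ((4:ℝ)⁻¹ ^ k) := by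
    intro k
    rcases Set.mem_iUnion₂.mp (hFsub k hf) with ⟨g, hg1, hg2⟩
    exact ⟨g, hg1, hg2⟩
  choose g hgF hgball using happrox
  have hdist : ∀ k, ‖f - g k‖ < (4:ℝ)⁻¹ ^ k := by
    intro k
    have := hgball k
    rwa [Metric.mem_ball, dist_eq_norm] at this
  have claim : ∀ m : ℕ, ‖g m x‖ ≤ (1 - (2:ℝ)⁻¹ ^ (m+1)) * V := by
    intro m
    induction m with
    | zero =>
      have hmem : (2:𝕜) • g 0 ∈ L 0 := hmemL 0 _ ⟨g 0, hgF 0, rfl⟩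
      have h1 : ‖((2:𝕜) • g 0) x‖ ≤ V := hevalle 0 _ hmem
      have h2 : ‖((2:𝕜) • g 0) x‖ = 2 * ‖g 0 x‖ := by
        rw [ContinuousLinearMap.smul_apply]
        have := norm_smul (2:𝕜) (g 0 x)
        rw [this, RCLike.norm_ofNat]
      rw [h2] at h1
      norm_num
      linarith
    | succ m ih =>
      have hd : ‖g (m+1) - g m‖ ≤ 2 * (4:ℝ)⁻¹ ^ m := by
        have h1 := hdist (m+1)
        have h2 := hdist m
        have h3 : ‖g (m+1) - g m‖ ≤ ‖f - g m‖ + ‖f - g (m+1)‖ := by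
          rw [show g (m+1) - g m = (f - g m) - (f - g (m+1)) by abel]
          exact norm_sub_le _ _
        have h4 : (4:ℝ)⁻¹ ^ (m+1) ≤ (4:ℝ)⁻¹ ^ m := by
          apply pow_le_pow_of_le_one (by norm_num) (by norm_num)
          omega
        linarith
      have hmem : ((2:𝕜)^(m+2)) • (g (m+1) - g m) ∈ L (m+1) :=
        hmemL (m+1) _ ⟨(g (m+1), g m), ⟨hgF (m+1), hgF m, hd⟩, rfl⟩
      have h1 : ‖(((2:𝕜)^(m+2)) • (g (m+1) - g m)) x‖ ≤ V := hevalle (m+1) _ hmem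
      have h2 : ‖(((2:𝕜)^(m+2)) • (g (m+1) - g m)) x‖
          = (2:ℝ)^(m+2) * ‖(g (m+1) - g m) x‖ := by
        rw [ContinuousLinearMap.smul_apply]
        have := norm_smul ((2:𝕜)^(m+2)) ((g (m+1) - g m) x)
        rw [this, norm_pow, RCLike.norm_ofNat]
      rw [h2] at h1
      have h3 : ‖(g (m+1) - g m) x‖ ≤ (2:ℝ)⁻¹ ^ (m+2) * V := by
        rw [inv_pow, inv_mul_eq_div, le_div_iff₀ (by positivity : (0:ℝ) < 2 ^ (m+2))]
        nlinarith [h1]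
      have h4 : ‖g (m+1) x‖ ≤ ‖g m x‖ + ‖(g (m+1) - g m) x‖ := by
        have : g (m+1) x = g m x + (g (m+1) - g m) x := by
          simp [ContinuousLinearMap.sub_apply]
        rw [this]
        exact norm_add_le _ _
      have h5 : ‖g (m+1) x‖ ≤ (1 - (2:ℝ)⁻¹ ^ (m+1)) * V + (2:ℝ)⁻¹ ^ (m+2) * V := by
        linarith
      have h6 : (1 - (2:ℝ)⁻¹ ^ (m+1)) * V + (2:ℝ)⁻¹ ^ (m+2) * V
          = (1 - (2:ℝ)⁻¹ ^ (m+2)) * V := by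
        rw [pow_succ (2:ℝ)⁻¹ (m+1)]
        ring
      linarith [h5, h6.le]
  -- take limits
  have hfin : ∀ m : ℕ, ‖f x‖ ≤ V + (4:ℝ)⁻¹ ^ m * ‖x‖ := by
    intro m
    have h1 : ‖f x‖ ≤ ‖g m x‖ + ‖(f - g m) x‖ := by
      have : f x = g m x + (f - g m) x := by simp
      rw [this]; exact norm_add_le _ _
    have h2 : ‖(f - g m) x‖ ≤ (4:ℝ)⁻¹ ^ m * ‖x‖ := by
      calc ‖(f - g m) x‖ ≤ ‖f - g m‖ * ‖x‖ := (f - g m).le_opNorm x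
        _ ≤ (4:ℝ)⁻¹ ^ m * ‖x‖ := by nlinarith [hdist m, norm_nonneg x]
    have h3 : ‖g m x‖ ≤ V := by
      have hc : (1 - (2:ℝ)⁻¹ ^ (m+1)) * V ≤ V := by
        have : (0:ℝ) < (2:ℝ)⁻¹ ^ (m+1) := by positivity
        nlinarith
      linarith [claim m]
    linarith
  have hlim : Tendsto (fun m : ℕ => V + (4:ℝ)⁻¹ ^ m * ‖x‖) atTop (nhds (V + 0 * ‖x‖)) := by
    apply Tendsto.add tendsto_const_nhds
    apply Tendsto.mul_const
    exact tendsto_pow_atTop_nhds_zero_of_lt_one (by norm_num) (by norm_num)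
  have := ge_of_tendsto' hlim hfin
  simpa using this

end Null

end TerzAux


open TerzAux

/-- **Terzioğlu's theorem.** A bounded linear operator `T : X → Y` between Banach spaces is
compact if and only if there is a sequence `(uₙ)` of continuous linear functionals on `X` with
`‖uₙ‖ → 0` such that `‖T x‖ ≤ sup_n |uₙ x|` for every `x`. -/
theorem terzioglu_isCompactOperator_iff {𝕜 X Y : Type*} [RCLike 𝕜]
    [NormedAddCommGroup X] [NormedSpace 𝕜 X] [CompleteSpace X]
    [NormedAddCommGroup Y] [NormedSpace 𝕜 Y] [CompleteSpace Y]
    (T : X →L[𝕜] Y) :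
    IsCompactOperator T ↔
      ∃ u : ℕ → (X →L[𝕜] 𝕜),
        Tendsto (fun n => ‖u n‖) atTop (nhds 0) ∧
        ∀ x : X, ‖T x‖ ≤ ⨆ n, ‖u n x‖ := by
  classical
  constructor
  · intro hT
    -- Schauder-type step: the set of `g ∘ T`, `‖g‖ ≤ 1`, is totally bounded in `X →L[𝕜] 𝕜`
    obtain ⟨K, hKcomp, hTK⟩ :=
      IsCompactOperator.image_closedBall_subset_compact (f := (T : X →ₗ[𝕜] Y)) hT 1
    set S : Set (X →L[𝕜] 𝕜) :=
      (fun g : Y →L[𝕜] 𝕜 => g.comp T) '' Metric.closedBall 0 1 with hSdef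
    have hStb : TotallyBounded S := by
      rw [Metric.totallyBounded_iff]
      intro ε hε
      set δ : ℝ := ε / 4 with hδ
      have hδpos : 0 < δ := by positivity
      obtain ⟨C, hCfin, hKC⟩ := Metric.totallyBounded_iff.mp hKcomp.totallyBounded δ hδpos
      -- the finite-dimensional projection
      haveI : Fintype ↥hCfin.toFinset := FinsetCoe.fintype _
      set Φ : (Y →L[𝕜] 𝕜) → (↥hCfin.toFinset → 𝕜) := fun g y => g y.1 with hΦ
      -- the image of the dual ball under Φ is bounded, hence totally bounded
      set cb : ℝ := 1 + Finset.sup hCfin.toFinset (fun y => ‖y‖₊) with hcb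
      have hcb0 : (0:ℝ) ≤ cb := by
        rw [hcb]; positivity
      have hA : TotallyBounded (Φ '' Metric.closedBall 0 1) := by
        refine TotallyBounded.subset ?_ (isCompact_closedBall (0 : ↥hCfin.toFinset → 𝕜) cb).totallyBounded
        rintro - ⟨g, hg, rfl⟩
        rw [Metric.mem_closedBall, dist_zero_right]
        rw [Metric.mem_closedBall, dist_zero_right] at hg
        refine pi_norm_le_iff_of_nonneg hcb0 |>.mpr fun y => ?_
        calc ‖g y.1‖ ≤ ‖g‖ * ‖y.1‖ := g.le_opNorm _
          _ ≤ 1 * ((hCfin.toFinset.sup fun y => ‖y‖₊ : NNReal) : ℝ) := by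
              have h1 : ‖y.1‖₊ ≤ hCfin.toFinset.sup fun y => ‖y‖₊ :=
                Finset.le_sup y.2
              have h2 : (‖y.1‖₊ : ℝ) ≤ ((hCfin.toFinset.sup fun y => ‖y‖₊ : NNReal) : ℝ) :=
                by exact_mod_cast h1
              rw [coe_nnnorm] at h2
              nlinarith [norm_nonneg (y.1 : Y), norm_nonneg g]
          _ ≤ cb := by rw [hcb]; norm_num
      obtain ⟨t, htsub, htfin, htcov⟩ := hA.exists_subset (Metric.dist_mem_uniformity hδpos)
      have hch : ∀ y ∈ t, ∃ g, g ∈ Metric.closedBall (0 : Y →L[𝕜] 𝕜) 1 ∧ Φ g = y := by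
        intro y hy
        rcases htsub hy with ⟨g, hg, hgy⟩
        exact ⟨g, hg, hgy⟩
      choose! Γ hΓball hΓeq using hch
      refine ⟨(fun y => (Γ y).comp T) '' t, htfin.image _, ?_⟩
      rintro - ⟨g, hg, rfl⟩
      have hΦg : Φ g ∈ Φ '' Metric.closedBall 0 1 := ⟨g, hg, rfl⟩
      rcases Set.mem_iUnion₂.mp (htcov hΦg) with ⟨y, hyt, hdy'⟩
      have hdy : dist (Φ g) y < δ := hdy'
      refine Set.mem_iUnion₂.mpr ⟨(Γ y).comp T, ⟨y, hyt, rfl⟩, ?_⟩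
      rw [Metric.mem_ball, dist_eq_norm]
      have hgnorm : ‖g‖ ≤ 1 := by rwa [Metric.mem_closedBall, dist_zero_right] at hg
      have hΓnorm : ‖Γ y‖ ≤ 1 := by
        have := hΓball y hyt
        rwa [Metric.mem_closedBall, dist_zero_right] at this
      -- pointwise bound on the unit ball
      have hball : ∀ z : X, ‖z‖ ≤ 1 → ‖(g - Γ y) (T z)‖ ≤ 3 * δ := by
        intro z hz
        have hTz : T z ∈ K := hTK ⟨z, by simpa [Metric.mem_closedBall, dist_zero_right] using hz, rfl⟩
        rcases Set.mem_iUnion₂.mp (hKC hTz) with ⟨c, hcC, hc⟩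
        rw [Metric.mem_ball, dist_eq_norm] at hc
        have hcF : c ∈ hCfin.toFinset := hCfin.mem_toFinset.mpr hcC
        have hcoord : ‖g c - Γ y c‖ ≤ δ := by
          have h1 : dist (Φ g ⟨c, hcF⟩) (y ⟨c, hcF⟩) ≤ dist (Φ g) y := dist_le_pi_dist _ _ _
          have h2 : y ⟨c, hcF⟩ = Γ y c := by
            conv_lhs => rw [← hΓeq y hyt]
          rw [h2] at h1
          have : dist (g c) (Γ y c) ≤ dist (Φ g) y := h1
          rw [dist_eq_norm] at this
          linarith [le_of_lt hdy, this]
        have hsplit : ‖(g - Γ y) (T z)‖ ≤ ‖(g - Γ y) (T z - c)‖ + ‖(g - Γ y) c‖ := by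
          have : (g - Γ y) (T z) = (g - Γ y) (T z - c) + (g - Γ y) c := by
            rw [← map_add]; congr 1; abel
          rw [this]; exact norm_add_le _ _
        have h1 : ‖(g - Γ y) (T z - c)‖ ≤ 2 * δ := by
          calc ‖(g - Γ y) (T z - c)‖ ≤ ‖g - Γ y‖ * ‖T z - c‖ := (g - Γ y).le_opNorm _
            _ ≤ 2 * δ := by
                have := norm_sub_le g (Γ y)
                nlinarith [norm_nonneg (g - Γ y), le_of_lt hc, hδpos.le]
        have h2 : ‖(g - Γ y) c‖ ≤ δ := by
          simpa [ContinuousLinearMap.sub_apply] using hcoord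
        linarith
      have hop : ‖g.comp T - (Γ y).comp T‖ ≤ 3 * δ := by
        have heq : g.comp T - (Γ y).comp T = (g - Γ y).comp T := by
          ext z; simp
        rw [heq]
        refine ContinuousLinearMap.opNorm_le_bound _ (by positivity) fun z => ?_
        rcases eq_or_ne z 0 with rfl | hz
        · simp
        · have hzc : ((‖z‖ : 𝕜)) ≠ 0 := by
            simpa using norm_ne_zero_iff.mpr hz
          have hz1 : ‖(‖z‖ : 𝕜)⁻¹ • z‖ ≤ 1 := by
            have h := norm_smul ((‖z‖ : 𝕜))⁻¹ z
            rw [h, norm_inv]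
            rw [show ‖((‖z‖ : ℝ) : 𝕜)‖ = ‖z‖ by
              rw [RCLike.norm_ofReal, abs_of_nonneg (norm_nonneg z)]]
            rw [inv_mul_cancel₀ (norm_ne_zero_iff.mpr hz)]
          have hb1 := hball ((‖z‖ : 𝕜)⁻¹ • z) hz1
          rw [ContinuousLinearMap.comp_apply]
          have hrw : T z = (‖z‖ : 𝕜) • T ((‖z‖ : 𝕜)⁻¹ • z) := by
            rw [map_smul, smul_smul, mul_inv_cancel₀ hzc, one_smul]
          rw [hrw, map_smul]
          have h2 := norm_smul ((‖z‖ : 𝕜)) ((g - Γ y) (T ((‖z‖ : 𝕜)⁻¹ • z)))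
          rw [h2, show ‖((‖z‖ : ℝ) : 𝕜)‖ = ‖z‖ by
              rw [RCLike.norm_ofReal, abs_of_nonneg (norm_nonneg z)]]
          nlinarith [norm_nonneg z]
      calc ‖g.comp T - (Γ y).comp T‖ ≤ 3 * δ := hop
        _ < ε := by rw [hδ]; linarith
    obtain ⟨u, hu1, hu2⟩ := exists_null_seq S hStb
    refine ⟨u, hu1, fun x => ?_⟩
    rcases eq_or_ne (T x) 0 with hTx | hTx
    · rw [hTx, norm_zero]
      exact le_trans (norm_nonneg (u 0 x)) (le_ciSup (bddAbove_eval u hu1 x) 0)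
    · obtain ⟨g, hg1, hg2⟩ := exists_dual_vector 𝕜 (T x) (norm_ne_zero_iff.mpr hTx)
      have hfS : g.comp T ∈ S := ⟨g, by simp [Metric.mem_closedBall, dist_zero_right, hg1.le], rfl⟩
      have := hu2 (g.comp T) hfS x
      rw [ContinuousLinearMap.comp_apply, hg2] at this
      simpa using this
  · rintro ⟨u, hu, hb⟩
    have htb : TotallyBounded (T '' Metric.closedBall 0 1) := by
      rw [Metric.totallyBounded_iff]
      intro ε hε
      obtain ⟨N, hN⟩ := Metric.tendsto_atTop.mp hu (ε / 4) (by positivity)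
      have hN' : ∀ n, N ≤ n → ‖u n‖ < ε / 4 := by
        intro n hn
        have := hN n hn
        rwa [Real.dist_0_eq_abs, abs_of_nonneg (norm_nonneg _)] at this
      obtain ⟨Cb, hCb⟩ := hu.bddAbove_range
      have hCb' : ∀ n, ‖u n‖ ≤ Cb := fun n => hCb ⟨n, rfl⟩
      set Ψ : X → (Fin N → 𝕜) := fun x i => u i x with hΨ
      have hA : TotallyBounded (Ψ '' Metric.closedBall 0 1) := by
        refine TotallyBounded.subset ?_ (isCompact_closedBall (0 : Fin N → 𝕜) (max Cb 0)).totallyBounded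
        rintro - ⟨x, hx, rfl⟩
        rw [Metric.mem_closedBall, dist_zero_right] at hx ⊢
        refine pi_norm_le_iff_of_nonneg (le_max_right _ _) |>.mpr fun i => ?_
        calc ‖u i x‖ ≤ ‖u i‖ * ‖x‖ := (u i).le_opNorm x
          _ ≤ max Cb 0 := by
              have := hCb' i
              nlinarith [norm_nonneg (u i), norm_nonneg x, le_max_left Cb (0:ℝ)]
      obtain ⟨t, htsub, htfin, htcov⟩ := hA.exists_subset (Metric.dist_mem_uniformity
        (show (0:ℝ) < ε / 4 by positivity))
      have hch : ∀ y ∈ t, ∃ x, x ∈ Metric.closedBall (0 : X) 1 ∧ Ψ x = y := by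
        intro y hy
        rcases htsub hy with ⟨x, hx, hxy⟩
        exact ⟨x, hx, hxy⟩
      choose! Γ hΓball hΓeq using hch
      refine ⟨(fun y => T (Γ y)) '' t, htfin.image _, ?_⟩
      rintro - ⟨x, hx, rfl⟩
      have hΨx : Ψ x ∈ Ψ '' Metric.closedBall 0 1 := ⟨x, hx, rfl⟩
      rcases Set.mem_iUnion₂.mp (htcov hΨx) with ⟨y, hyt, hdy'⟩
      have hdy : dist (Ψ x) y < ε / 4 := hdy'
      refine Set.mem_iUnion₂.mpr ⟨T (Γ y), ⟨y, hyt, rfl⟩, ?_⟩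
      rw [Metric.mem_ball, dist_eq_norm, ← map_sub]
      have hxn : ‖x‖ ≤ 1 := by rwa [Metric.mem_closedBall, dist_zero_right] at hx
      have hΓn : ‖Γ y‖ ≤ 1 := by
        have := hΓball y hyt
        rwa [Metric.mem_closedBall, dist_zero_right] at this
      have hsub2 : ‖x - Γ y‖ ≤ 2 := by
        have := norm_sub_le x (Γ y)
        linarith
      have hsup : (⨆ n, ‖u n (x - Γ y)‖) ≤ ε / 2 := by
        apply ciSup_le
        intro n
        rcases lt_or_ge n N with hn | hn
        · have h1 : dist (Ψ x ⟨n, hn⟩) (y ⟨n, hn⟩) ≤ dist (Ψ x) y := dist_le_pi_dist _ _ _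
          have h2 : y ⟨n, hn⟩ = u n (Γ y) := by conv_lhs => rw [← hΓeq y hyt]
          rw [h2] at h1
          have h3 : dist (u n x) (u n (Γ y)) ≤ dist (Ψ x) y := h1
          rw [dist_eq_norm] at h3
          rw [map_sub]
          linarith [le_of_lt hdy, h3, hε.le]
        · calc ‖u n (x - Γ y)‖ ≤ ‖u n‖ * ‖x - Γ y‖ := (u n).le_opNorm _
            _ ≤ ε / 2 := by nlinarith [hN' n hn, norm_nonneg (u n), norm_nonneg (x - Γ y)]
      calc ‖T (x - Γ y)‖ ≤ ⨆ n, ‖u n (x - Γ y)‖ := hb _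
        _ ≤ ε / 2 := hsup
        _ < ε := by linarith
    have hclos : IsCompact (closure (T '' Metric.closedBall 0 1)) :=
      isCompact_iff_totallyBounded_isComplete.mpr ⟨htb.closure, isClosed_closure.isComplete⟩
    exact (isCompactOperator_iff_exists_mem_nhds_isCompact_closure_image (⇑T)).mpr
      ⟨Metric.closedBall 0 1, Metric.closedBall_mem_nhds 0 one_pos, hclos⟩
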